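/- The inverse-CDF (quantile) mechanism for categorical sampling violates counterfactual stability: there exist n ∈ ℕ, strictly positive probability vectors p and p' on Fin n, a real u ∈ (0,1), and distinct indices i, j ∈ Fin n such that Q_p(u) = i, p' i / p i ≥ p' j / p j, and Q_{p'}(u) = j. (For instance n = 3, p = (1/2, 3/10, 1/5), p' = (3/10, 1/10, 3/5), u = 7/20, i = 0, j = 1.) -/

import Mathlib

open Classical in
/-- The inverse-CDF (quantile) mechanism on `Fin n` with respect to the natural
order: `Qcdf p u` is the least index `i` such that `u ≤ ∑_{k ≤ i} p k`
(and `0` if no such index exists). -/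
noncomputable def Qcdf {n : ℕ} [NeZero n] (p : Fin n → ℝ) (u : ℝ) : Fin n :=
  if h : (Finset.univ.filter
      (fun i : Fin n => u ≤ ∑ k ∈ Finset.Iic i, p k)).Nonempty then
    (Finset.univ.filter (fun i : Fin n => u ≤ ∑ k ∈ Finset.Iic i, p k)).min' h
  else 0

/-- The inverse-CDF (quantile) mechanism for categorical sampling violates
counterfactual stability: there are strictly positive probability vectors
`p, p'`, an exogenous value `u ∈ (0,1)`, and distinct indices `i ≠ j` with
`Qcdf p u = i`, `p' i / p i ≥ p' j / p j`, and yet `Qcdf p' u = j`. -/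
theorem inverseCDF_violates_counterfactual_stability :
    ∃ (n : ℕ) (p p' : Fin (n + 1) → ℝ) (u : ℝ) (i j : Fin (n + 1)),
      (∀ k, 0 < p k) ∧ (∑ k, p k = 1) ∧
      (∀ k, 0 < p' k) ∧ (∑ k, p' k = 1) ∧
      0 < u ∧ u < 1 ∧ i ≠ j ∧
      Qcdf p u = i ∧ p' i / p i ≥ p' j / p j ∧ Qcdf p' u = j := by
  refine ⟨2, ![1/2, 3/10, 1/5], ![3/10, 1/10, 3/5], 7/20, 0, 1, ?_, ?_, ?_, ?_, ?_, ?_, ?_, ?_, ?_, ?_⟩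
  · intro k; fin_cases k <;> norm_num
  · simp [Fin.sum_univ_three]; norm_num
  · intro k; fin_cases k <;> norm_num
  · simp [Fin.sum_univ_three]; norm_num
  · norm_num
  · norm_num
  · decide
  · have hs : (Finset.univ.filter
        (fun i : Fin 3 => (7:ℝ)/20 ≤ ∑ k ∈ Finset.Iic i, ![1/2, 3/10, 1/5] k)) = {0,1,2} := by
      ext k
      fin_cases k <;>
        simp [show Finset.Iic (0:Fin 3) = {0} from by decide,
          show Finset.Iic (1:Fin 3) = {0,1} from by decide,
          show Finset.Iic (2:Fin 3) = {0,1,2} from by decide] <;> norm_num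
    rw [Qcdf, dif_pos (by rw [hs]; exact ⟨0, by decide⟩)]
    simp only [hs]
    exact le_antisymm (Finset.min'_le _ 0 (by decide)) (Fin.zero_le _)
  · norm_num
  · have hs : (Finset.univ.filter
        (fun i : Fin 3 => (7:ℝ)/20 ≤ ∑ k ∈ Finset.Iic i, ![3/10, 1/10, 3/5] k)) = {1,2} := by
      ext k
      fin_cases k <;>
        simp [show Finset.Iic (0:Fin 3) = {0} from by decide,
          show Finset.Iic (1:Fin 3) = {0,1} from by decide,
          show Finset.Iic (2:Fin 3) = {0,1,2} from by decide] <;> norm_num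
    rw [Qcdf, dif_pos (by rw [hs]; exact ⟨1, by decide⟩)]
    simp only [hs]
    exact le_antisymm (Finset.min'_le _ 1 (by decide))
      (Finset.le_min' _ _ _ (by decide))
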